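/- Every hyperbolic matrix M ∈ GL₂(ℤ) (integer 2×2 matrix with determinant ±1 and no eigenvalue of absolute value 1) is conjugate in GL₂(ℤ) to a matrix of the form ±∏_{i=1}^{n} [[k_i, 1],[1, 0]] with n ≥ 1 and k₁,…,k_n positive integers. -/

import Mathlib

open Matrix

namespace Stmt8

def IsFix (a b c d : ℤ) (x : ℝ) : Prop := (a:ℝ)*x + b = x*((c:ℝ)*x + d)

def Pair (a b c d : ℤ) (x y : ℝ) : Prop :=
  IsFix a b c d x ∧ IsFix a b c d y ∧ |(c:ℝ)*y + d| < 1 ∧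
    Irrational x ∧ Irrational y ∧ x ≠ y

theorem vieta_sum {a b c d : ℤ} {x y : ℝ} (hx : IsFix a b c d x)
    (hy : IsFix a b c d y) (hxy : x ≠ y) : (c:ℝ)*(x+y) = (a:ℝ) - d := by
  have h := sub_ne_zero.mpr hxy
  have key : ((c:ℝ)*(x+y)) * (x - y) = ((a:ℝ) - d) * (x - y) := by
    unfold IsFix at hx hy; linear_combination hy - hx
  exact mul_right_cancel₀ h key

theorem vieta_prod {a b c d : ℤ} {x y : ℝ} (hx : IsFix a b c d x)
    (hy : IsFix a b c d y) (hxy : x ≠ y) : (c:ℝ)*x*y = -(b:ℝ) := by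
  have h := sub_ne_zero.mpr hxy
  have key : ((c:ℝ)*x*y) * (x - y) = (-(b:ℝ)) * (x - y) := by
    unfold IsFix at hx hy; linear_combination x*hy - y*hx
  exact mul_right_cancel₀ h key

theorem c_ne_zero {a b c d : ℤ} {x y : ℝ} (h : Pair a b c d x y)
    (hdet : a*d - b*c = 1 ∨ a*d - b*c = -1) : c ≠ 0 := by
  rintro rfl
  obtain ⟨hx, hy, hev, hix, hiy, hxy⟩ := h
  unfold IsFix at hx hy
  push_cast at hx hy
  by_cases had : a = d
  · subst had
    have hb : (b:ℝ) = 0 := by nlinarith [hx]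
    have hb0 : b = 0 := by exact_mod_cast hb
    subst hb0
    simp only [Int.cast_zero, zero_mul, zero_add] at hev
    have h1 : a * a = 1 ∨ a * a = -1 := by simpa using hdet
    have h2 : a * a = 1 := by
      rcases h1 with h1 | h1
      · exact h1
      · nlinarith [sq_nonneg a]
    rcases mul_self_eq_one_iff.mp h2 with rfl | rfl <;> norm_num at hev
  · have had : (a:ℝ) - d ≠ 0 := by
      simpa [sub_eq_zero] using fun hh => had (by exact_mod_cast hh)
    have hxval : x = (-b) / ((a:ℝ) - d) := by
      field_simp
      nlinarith [hx]
    exact (hix.ne_rat ((-b : ℚ) / ((a:ℚ) - d))) (by push_cast [hxval]; ring)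

def Rel (M A : Matrix (Fin 2) (Fin 2) ℤ) : Prop :=
  ∃ Q : Matrix (Fin 2) (Fin 2) ℤ, (Q.det = 1 ∨ Q.det = -1) ∧ Q * M = A * Q

theorem Rel.refl (M : Matrix (Fin 2) (Fin 2) ℤ) : Rel M M :=
  ⟨1, Or.inl (by simp), by simp⟩

theorem Rel.trans {M A B : Matrix (Fin 2) (Fin 2) ℤ} (h1 : Rel M A) (h2 : Rel A B) :
    Rel M B := by
  obtain ⟨Q1, hd1, he1⟩ := h1
  obtain ⟨Q2, hd2, he2⟩ := h2
  refine ⟨Q2 * Q1, ?_, ?_⟩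
  · rw [Matrix.det_mul]
    rcases hd1 with h | h <;> rcases hd2 with h' | h' <;> rw [h, h'] <;> norm_num
  · rw [Matrix.mul_assoc, he1, ← Matrix.mul_assoc, he2, Matrix.mul_assoc]

theorem rel_step (a b c d k : ℤ) :
    Rel !![a,b;c,d] !![c*k+d, c; -(c*k^2+(d-a)*k-b), a-k*c] := by
  refine ⟨!![0,1;1,-k], ?_, ?_⟩
  · right; simp [Matrix.det_fin_two]
  · rw [Matrix.mul_fin_two, Matrix.mul_fin_two]
    congr 1 <;> ring

theorem isFix_step {a b c d k : ℤ} {x : ℝ} (hx : IsFix a b c d x) (hxk : x ≠ (k:ℝ)) :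
    IsFix (c*k+d) c (-(c*k^2+(d-a)*k-b)) (a-k*c) (x - k)⁻¹ ∧
    ((-(c*k^2+(d-a)*k-b) : ℤ):ℝ) * (x-(k:ℝ))⁻¹ + ((a-k*c : ℤ):ℝ) = (c:ℝ)*x + d := by
  have hu : x - (k:ℝ) ≠ 0 := sub_ne_zero.mpr hxk
  unfold IsFix at hx
  have hev : ((-(c*k^2+(d-a)*k-b) : ℤ):ℝ) * (x-(k:ℝ))⁻¹ + ((a-k*c : ℤ):ℝ) = (c:ℝ)*x + d := by
    field_simp
    push_cast
    linear_combination hx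
  refine ⟨?_, hev⟩
  unfold IsFix
  rw [hev]
  field_simp
  push_cast
  ring

theorem one_step {a b c d : ℤ} {x y : ℝ} (h : Pair a b c d x y)
    (hdet : a*d - b*c = 1 ∨ a*d - b*c = -1) (k : ℤ) (hk : k = ⌊x⌋) :
    Pair (c*k+d) c (-(c*k^2+(d-a)*k-b)) (a-k*c) (x - k)⁻¹ ((y - k)⁻¹) ∧
      ((c*k+d)*(a-k*c) - c*(-(c*k^2+(d-a)*k-b)) = 1 ∨
       (c*k+d)*(a-k*c) - c*(-(c*k^2+(d-a)*k-b)) = -1) ∧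
      Rel !![a,b;c,d] !![c*k+d, c; -(c*k^2+(d-a)*k-b), a-k*c] ∧
      1 < (x - k)⁻¹ ∧
      ((-(c*k^2+(d-a)*k-b) : ℤ):ℝ) * ((x-(k:ℝ))⁻¹ - (y-(k:ℝ))⁻¹) = (c:ℝ)*(x - y) := by
  obtain ⟨hx, hy, hev, hix, hiy, hxy⟩ := h
  have hxk : x ≠ (k:ℝ) := hix.ne_int k
  have hyk : y ≠ (k:ℝ) := hiy.ne_int k
  have hux : x - (k:ℝ) ≠ 0 := sub_ne_zero.mpr hxk
  have huy : y - (k:ℝ) ≠ 0 := sub_ne_zero.mpr hyk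
  obtain ⟨hfix', hevx⟩ := isFix_step hx hxk
  obtain ⟨hfiy', hevy⟩ := isFix_step hy hyk
  have hsum := vieta_sum hx hy hxy
  have hprod := vieta_prod hx hy hxy
  -- c' = -c(x-k)(y-k)
  have hc' : ((-(c*k^2+(d-a)*k-b) : ℤ):ℝ) = -(c:ℝ)*(x-k)*(y-k) := by
    push_cast
    linear_combination (-(k:ℝ))*hsum + hprod
  refine ⟨⟨hfix', hfiy', ?_, ?_, ?_, ?_⟩, ?_, rel_step a b c d k, ?_, ?_⟩
  · rw [hevy]; exact hev
  · exact ((hix.sub_intCast k).inv)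
  · exact ((hiy.sub_intCast k).inv)
  · intro hh
    exact hxy (by
      have := congrArg (·⁻¹) hh
      simp only [inv_inv] at this
      linarith [this])
  · rcases hdet with hd | hd
    · left; linear_combination hd
    · right; linear_combination hd
  · -- 1 < (x - k)⁻¹
    have h1 : (0:ℝ) < x - k := by
      rcases lt_or_gt_of_ne (sub_ne_zero.mpr hxk) with h | h
      · exfalso
        have := Int.floor_le x
        rw [← hk] at this
        linarith
      · exact h
    have h2 : x - k < 1 := by
      have := Int.lt_floor_add_one x
      rw [← hk] at this
      linarith
    exact one_lt_inv_iff₀.mpr ⟨h1, h2⟩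
  · rw [hc']
    field_simp
    ring

def Concl (a b c d : ℤ) : Prop :=
  ∃ a' b' c' d' : ℤ, ∃ x' y' : ℝ, Pair a' b' c' d' x' y' ∧
    (a'*d' - b'*c' = 1 ∨ a'*d' - b'*c' = -1) ∧
    Rel !![a,b;c,d] !![a',b';c',d'] ∧ 1 < x' ∧ -1 < y' ∧ y' < 0

theorem concl_comp {a b c d a' b' c' d' : ℤ}
    (hrel : Rel !![a,b;c,d] !![a',b';c',d']) (h : Concl a' b' c' d') :
    Concl a b c d := by
  obtain ⟨a2, b2, c2, d2, x2, y2, hp, hd, hr, hx, hy1, hy2⟩ := h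
  exact ⟨a2, b2, c2, d2, x2, y2, hp, hd, hrel.trans hr, hx, hy1, hy2⟩

theorem floor_pos_of_one_lt {x : ℝ} (hx : 1 < x) : 1 ≤ ⌊x⌋ :=
  Int.le_floor.mpr (by exact_mod_cast hx.le)

theorem finish_neg {a b c d : ℤ} {x y : ℝ} (h : Pair a b c d x y)
    (hdet : a*d - b*c = 1 ∨ a*d - b*c = -1) (hx : 1 < x) (hy : y < 0) :
    Concl a b c d := by
  have hym1 : y ≠ (-1:ℝ) := by
    have := h.2.2.2.2.1.ne_int (-1); push_cast at this; exact this
  rcases lt_or_gt_of_ne hym1 with hy1 | hy1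
  swap
  · -- -1 < y : done
    exact ⟨a, b, c, d, x, y, h, hdet, Rel.refl _, hx, hy1, hy⟩
  · -- y < -1
    set k := ⌊x⌋ with hk
    have hk1 : 1 ≤ k := floor_pos_of_one_lt hx
    obtain ⟨h1pair, h1det, h1rel, h1x, -⟩ := one_step h hdet k rfl
    have hz : y - (k:ℝ) < -1 := by
      have : (1:ℝ) ≤ k := by exact_mod_cast hk1
      linarith
    refine concl_comp h1rel ⟨_, _, _, _, _, _, h1pair, h1det, Rel.refl _, h1x, ?_, ?_⟩
    · nlinarith [mul_inv_cancel₀ (show y - (k:ℝ) ≠ 0 by linarith)]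
    · exact inv_lt_zero.mpr (by linarith)

theorem reduce : ∀ n : ℕ, ∀ a b c d : ℤ, ∀ x y : ℝ, Pair a b c d x y →
    (a*d - b*c = 1 ∨ a*d - b*c = -1) → c.natAbs ≤ n → Concl a b c d := by
  intro n
  induction n using Nat.strong_induction_on with
  | _ n ih =>
  intro a b c d x y h hdet hn
  have hiy := h.2.2.2.2.1
  have hxy := h.2.2.2.2.2
  set k := ⌊x⌋ with hk
  obtain ⟨h1pair, h1det, h1rel, h1x, h1key⟩ := one_step h hdet k rfl
  have hyk : y ≠ (k:ℝ) := hiy.ne_int k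
  have hyk1 : y ≠ ((k:ℝ) + 1) := by
    have := hiy.ne_int (k+1); push_cast at this; exact this
  rcases lt_trichotomy (y - (k:ℝ)) 0 with hz | hz | hz
  · -- y₁ < 0 : finish
    exact concl_comp h1rel (finish_neg h1pair h1det h1x (inv_lt_zero.mpr hz))
  · exact absurd (by linarith : y = (k:ℝ)) hyk
  · rcases lt_trichotomy (y - (k:ℝ)) 1 with hz1 | hz1 | hz1
    · -- 0 < y - k < 1 : descent
      have h1y : 1 < (y - (k:ℝ))⁻¹ := one_lt_inv_iff₀.mpr ⟨hz, hz1⟩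
      -- measure decreases
      have hc : c ≠ 0 := c_ne_zero h hdet
      have hc1 : (-(c*k^2+(d-a)*k-b)) ≠ 0 := c_ne_zero h1pair h1det
      have hxk0 : 0 < x - (k:ℝ) := by
        have h1 := Int.floor_le x
        have h2 : x ≠ (k:ℝ) := h.2.2.2.1.ne_int k
        rw [← hk] at h1
        rcases lt_or_gt_of_ne (sub_ne_zero.mpr h2) with hh | hh
        · exfalso; linarith
        · exact hh
      have hxk1 : x - (k:ℝ) < 1 := by
        have := Int.lt_floor_add_one x; rw [← hk] at this; linarith
      have hdiff : (x - (k:ℝ))⁻¹ - (y - (k:ℝ))⁻¹ = (y - x)/((x-(k:ℝ))*(y-(k:ℝ))) := by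
        rw [inv_sub_inv (by positivity) (by positivity)]
        ring_nf
      have habs : |(x - (k:ℝ))⁻¹ - (y - (k:ℝ))⁻¹| > |x - y| := by
        rw [hdiff, abs_div, abs_sub_comm y x]
        rw [gt_iff_lt, lt_div_iff₀ (by positivity)]
        have hxy0 : 0 < |x - y| := abs_sub_pos.mpr hxy
        have : |(x-(k:ℝ))*(y-(k:ℝ))| = (x-(k:ℝ))*(y-(k:ℝ)) := abs_of_pos (by positivity)
        rw [this]
        have hprod1 : (x-(k:ℝ))*(y-(k:ℝ)) < 1 := by nlinarith
        nlinarith [mul_lt_mul_of_pos_left hprod1 hxy0]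
      have hkey2 : |((-(c*k^2+(d-a)*k-b) : ℤ):ℝ)| * |(x - (k:ℝ))⁻¹ - (y - (k:ℝ))⁻¹|
          = |(c:ℝ)| * |x - y| := by
        rw [← abs_mul, ← abs_mul, h1key]
      have hcast : ∀ m : ℤ, |(m:ℝ)| = (m.natAbs : ℝ) := by
        intro m; rw [Nat.cast_natAbs]; push_cast; ring
      have hlt : (-(c*k^2+(d-a)*k-b)).natAbs < c.natAbs := by
        have hxy0 : 0 < |x - y| := abs_sub_pos.mpr hxy
        have hA0 : (0:ℝ) < |(x - (k:ℝ))⁻¹ - (y - (k:ℝ))⁻¹| := lt_trans hxy0 habs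
        have hv : (1:ℝ) ≤ (c.natAbs : ℝ) := by
          have : 1 ≤ c.natAbs := by omega
          exact_mod_cast this
        rw [hcast, hcast] at hkey2
        have : ((-(c*k^2+(d-a)*k-b)).natAbs : ℝ) < (c.natAbs : ℝ) := by
          nlinarith [hkey2, habs, hxy0, hA0, hv]
        exact_mod_cast this
      exact concl_comp h1rel (ih _ (lt_of_lt_of_le hlt hn) _ _ _ _ _ _ h1pair h1det le_rfl)
    · exact absurd (by linarith : y = (k:ℝ) + 1) hyk1
    · -- y - k > 1 : two more steps
      have h1y0 : 0 < (y - (k:ℝ))⁻¹ := by positivity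
      have h1y1 : (y - (k:ℝ))⁻¹ < 1 := by
        rw [inv_lt_one_iff₀]; right; linarith
      set k1 := ⌊(x - (k:ℝ))⁻¹⌋ with hk1
      have hk11 : 1 ≤ k1 := floor_pos_of_one_lt h1x
      obtain ⟨h2pair, h2det, h2rel, h2x, -⟩ := one_step h1pair h1det k1 rfl
      have : (y - (k:ℝ))⁻¹ - (k1:ℝ) < 0 := by
        have : (1:ℝ) ≤ k1 := by exact_mod_cast hk11
        linarith
      exact concl_comp h1rel (concl_comp h2rel
        (finish_neg h2pair h2det h2x (inv_lt_zero.mpr this)))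

theorem to_S' {a b c d : ℤ} {x y : ℝ} (h : Pair a b c d x y) (hx : 1 < x)
    (hy1 : -1 < y) (hy0 : y < 0) (hc : 1 ≤ c) :
    1 ≤ b ∧ 0 ≤ d ∧ b ≤ a ∧ c ≤ a ∧ d ≤ b ∧ d ≤ c := by
  obtain ⟨hfx, hfy, hev, hix, hiy, hxy⟩ := h
  have hsum := vieta_sum hfx hfy hxy
  have hprod := vieta_prod hfx hfy hxy
  have hμ := abs_lt.mp hev
  have hcR : (1:ℝ) ≤ (c:ℝ) := by exact_mod_cast hc
  have hc0 : (0:ℝ) < (c:ℝ) := by linarith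
  have t1 : (0:ℝ) < (c:ℝ)*x*(-y) :=
    mul_pos (mul_pos hc0 (by linarith)) (by linarith)
  have t2 : (0:ℝ) < (c:ℝ)*(-y) := mul_pos hc0 (by linarith)
  have t3 : (c:ℝ)*(-y) < (c:ℝ) := by nlinarith
  have t4 : (0:ℝ) < ((c:ℝ)*x)*(1+y) := mul_pos (mul_pos hc0 (by linarith)) (by linarith)
  have t5 : (0:ℝ) < (c:ℝ)*(x-1) := mul_pos hc0 (by linarith)
  have t6 : (0:ℝ) < ((c:ℝ)*y)*(y-y-1+ (1-x) +1) := by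
    have : (c:ℝ)*y < 0 := by nlinarith
    have h1x : 1 - x < 0 := by linarith
    calc (0:ℝ) < ((c:ℝ)*y)*(1-x) := mul_pos_of_neg_of_neg this h1x
    _ = ((c:ℝ)*y)*(y-y-1+ (1-x) +1) := by ring
  have hb : (0:ℝ) < b := by nlinarith [hprod, t1]
  have hd : (-1:ℝ) < d := by nlinarith [hμ.1, t2]
  have hdc : (d:ℝ) < c + 1 := by nlinarith [hμ.2, t3]
  have hab : (-1:ℝ) < a - b := by nlinarith [hμ.1, hprod, hsum, t4]
  have hac : (-1:ℝ) < a - c := by nlinarith [hμ.1, hsum, t5]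
  have hbd : (-1:ℝ) < b - d := by nlinarith [hμ.2, hprod, t6]
  refine ⟨?_, ?_, ?_, ?_, ?_, ?_⟩
  · have : (0:ℤ) < b := by exact_mod_cast hb
    omega
  · have : (-1:ℤ) < d := by exact_mod_cast hd
    omega
  · have : (-1:ℤ) < a - b := by exact_mod_cast hab
    omega
  · have : (-1:ℤ) < a - c := by exact_mod_cast hac
    omega
  · have : (-1:ℤ) < b - d := by exact_mod_cast hbd
    omega
  · have : (d:ℤ) < c + 1 := by exact_mod_cast hdc
    omega

theorem factor : ∀ N : ℕ, ∀ a b c d : ℤ, a.natAbs ≤ N →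
    (a*d - b*c = 1 ∨ a*d - b*c = -1) → 1 ≤ b → 1 ≤ c → 0 ≤ d →
    b ≤ a → c ≤ a → d ≤ b → d ≤ c →
    ∃ n : ℕ, 1 ≤ n ∧ ∃ k : Fin n → ℤ, (∀ i, 1 ≤ k i) ∧
      !![a,b;c,d] = (List.ofFn (fun i : Fin n => !![k i, 1; 1, 0])).prod := by
  intro N
  induction N with
  | zero =>
    intro a b c d hN hdet hb hc hd hba hca hdb hdc
    omega
  | succ N ih =>
    intro a b c d hN hdet hb hc hd hba hca hdb hdc
    rcases eq_or_lt_of_le hd with hd0 | hd1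
    · -- d = 0
      have hd0 : d = 0 := hd0.symm
      subst hd0
      have hbc : b * c = 1 := by
        rcases hdet with h | h
        · nlinarith
        · linarith [h]
      have hb1 : b = 1 := by nlinarith
      have hc1 : c = 1 := by nlinarith
      subst hb1; subst hc1
      refine ⟨1, le_refl _, fun _ => a, fun _ => by show (1:ℤ) ≤ a; omega, ?_⟩
      simp
    · -- 1 ≤ d
      have hane : a ≠ c := by
        rintro rfl
        have h1 : a * d - b * a = a * (d - b) := by ring
        have h2 : a ∣ (1:ℤ) ∨ a ∣ (-1:ℤ) := by
          rcases hdet with h | h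
          · left; exact ⟨d - b, by linarith [h1]⟩
          · right; exact ⟨d - b, by linarith [h1]⟩
        have ha1 : a = 1 := by
          rcases h2 with h | h
          · have := Int.le_of_dvd (by norm_num) h
            have := Int.eq_one_of_dvd_one (by omega) h
            omega
          · have : a ∣ (1:ℤ) := (dvd_neg.mp h)
            have := Int.eq_one_of_dvd_one (by omega) this
            omega
        subst ha1
        have hb1 : b = 1 := by omega
        have hd1' : d = 1 := by omega
        subst hb1; subst hd1'
        omega
      have hca' : c + 1 ≤ a := by omega
      set k := (a-1)/c with hkdef
      have hc0 : (0:ℤ) < c := by omega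
      have hmod := Int.emod_nonneg (a-1) (by omega : c ≠ 0)
      have hmod2 := Int.emod_lt_of_pos (a-1) hc0
      have hdivmod := Int.mul_ediv_add_emod (a-1) c
      have hkc : k * c = c * ((a-1)/c) := by rw [hkdef]; ring
      set c' := a - k*c with hc'def
      have hc'1 : 1 ≤ c' := by omega
      have hc'c : c' ≤ c := by omega
      have hk1 : 1 ≤ k := by
        rw [hkdef]
        rw [Int.le_ediv_iff_mul_le hc0]
        omega
      set d' := b - k*d with hd'def
      have key : c*d' = d*c' - (a*d - b*c) := by rw [hc'def, hd'def]; ring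
      have he : a*d - b*c = 1 ∨ a*d - b*c = -1 := hdet
      -- auxiliary facts for e = -1
      have hcd : a*d - b*c = -1 → c ≠ d := by
        rintro he' rfl
        have : c * (a - b) = -1 := by linarith [show c*a - b*c = c*(a-b) by ring]
        have hc1 : c = 1 := by
          have h2 : c ∣ (-1:ℤ) := ⟨a - b, by linarith⟩
          have h3 : c ∣ (1:ℤ) := (dvd_neg.mp h2)
          have := Int.eq_one_of_dvd_one (by omega) h3
          omega
        subst hc1
        omega
      have hc'ne : a*d - b*c = -1 → c' ≠ c := by
        intro he' hcc
        rw [hcc] at key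
        have h2 : c ∣ (1:ℤ) := ⟨d' - d, by linarith [show c*d' - c*d = c*(d'-d) by ring]⟩
        have hc1 : c = 1 := by
          have := Int.eq_one_of_dvd_one (by omega) h2
          omega
        subst hc1
        -- then d ≤ c = 1 so d = 1, and a*1 - b*1 = -1 with b ≤ a: contra
        have : d = 1 := by omega
        subst this
        omega
      have hd'0 : 0 ≤ d' := by
        rcases he with h | h <;> nlinarith
      have hd'd : d' ≤ d := by
        rcases he with h | h
        · nlinarith
        · have h1 : c' ≤ c - 1 := by
            have := hc'ne h
            omega
          nlinarith
      have hd'c' : d' ≤ c' := by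
        rcases he with h | h
        · nlinarith
        · have h1 : d ≤ c - 1 := by
            have := hcd h
            omega
          nlinarith
      have hdet' : c*d' - d*c' = 1 ∨ c*d' - d*c' = -1 := by
        rcases he with h | h
        · right; omega
        · left; omega
      have hNa : c.natAbs ≤ N := by omega
      obtain ⟨n, hn1, ks, hks, heq⟩ := ih c d c' d' hNa hdet' hd1 hc'1 hd'0 hdc hc'c hd'd hd'c'
      refine ⟨n+1, by omega, Fin.cons k ks, ?_, ?_⟩
      · intro i
        refine Fin.cases ?_ ?_ i
        · simpa using hk1
        · intro j; simpa using hks j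
      · have hstep : !![a,b;c,d] = !![k,1;1,0] * !![c,d;c',d'] := by
          rw [Matrix.mul_fin_two]
          have e1 : k*c + 1*c' = a := by rw [hc'def]; ring
          have e2 : k*d + 1*d' = b := by rw [hd'def]; ring
          have e3 : (1*c + 0*c' : ℤ) = c := by ring
          have e4 : (1*d + 0*d' : ℤ) = d := by ring
          rw [e1, e2, e3, e4]
        rw [hstep, heq, List.ofFn_succ]
        simp only [Fin.cons_zero, Fin.cons_succ, List.prod_cons]

theorem charpoly_eval (A : Matrix (Fin 2) (Fin 2) ℂ) (z : ℂ) :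
    A.charpoly.eval z = z^2 - (A 0 0 + A 1 1)*z + (A 0 0 * A 1 1 - A 0 1 * A 1 0) := by
  have h01 : (0 : Fin 2) ≠ 1 := by decide
  rw [Matrix.charpoly, Matrix.det_fin_two, Matrix.charmatrix_apply_eq,
    Matrix.charmatrix_apply_eq, Matrix.charmatrix_apply_ne _ _ _ h01,
    Matrix.charmatrix_apply_ne _ _ _ h01.symm]
  simp only [Polynomial.eval_add, Polynomial.eval_sub, Polynomial.eval_mul,
    Polynomial.eval_X, Polynomial.eval_C, Polynomial.eval_neg]
  ring

theorem initial (M : Matrix (Fin 2) (Fin 2) ℤ) (hdet : M.det = 1 ∨ M.det = -1)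
    (hhyp : ∀ z : ℂ, (Matrix.charpoly (M.map (Int.cast : ℤ → ℂ))).IsRoot z →
      ‖z‖ ≠ 1) :
    ∃ x y : ℝ, Pair (M 0 0) (M 0 1) (M 1 0) (M 1 1) x y := by
  set a := M 0 0 with ha
  set b := M 0 1 with hb
  set c := M 1 0 with hc
  set d := M 1 1 with hd
  have hdet' : a*d - b*c = 1 ∨ a*d - b*c = -1 := by
    rwa [Matrix.det_fin_two] at hdet
  set t := a + d with ht
  set e := a*d - b*c with he
  have hroot : ∀ r : ℝ, r^2 - (t:ℝ)*r + (e:ℝ) = 0 → |r| ≠ 1 := by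
    intro r hr
    have h1 : (Matrix.charpoly (M.map (Int.cast : ℤ → ℂ))).IsRoot (r:ℂ) := by
      unfold Polynomial.IsRoot
      rw [charpoly_eval]
      simp only [Matrix.map_apply, ← ha, ← hb, ← hc, ← hd]
      have : ((r:ℂ))^2 - ((a:ℂ) + (d:ℂ))*(r:ℂ) + ((a:ℂ)*(d:ℂ) - (b:ℂ)*(c:ℂ)) = 0 := by
        have := hr
        push_cast at this ⊢
        exact_mod_cast congrArg (Complex.ofReal) this
      convert this using 2 <;> push_cast <;> ring
    have := hhyp _ h1
    rwa [Complex.norm_real, Real.norm_eq_abs] at this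
  set D := t^2 - 4*e with hD
  -- D > 0
  have hDpos : 0 < D := by
    by_contra hneg
    rw [not_lt] at hneg
    set s0 := Real.sqrt (-(D:ℝ)) with hs0
    have hDn : (0:ℝ) ≤ -(D:ℝ) := by
      have : (D:ℝ) ≤ 0 := by exact_mod_cast hneg
      linarith
    have hs2 : s0^2 = -(D:ℝ) := Real.sq_sqrt hDn
    set z : ℂ := (((t:ℝ)/2 : ℝ) : ℂ) + ((s0/2 : ℝ) : ℂ) * Complex.I with hz
    have hs2C : ((s0:ℝ):ℂ)^2 = -((D:ℤ):ℂ) := by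
      exact_mod_cast congrArg (Complex.ofReal) hs2
    have hDC : ((D:ℤ):ℂ) = ((a:ℂ)+(d:ℂ))^2 - 4*((a:ℂ)*(d:ℂ) - (b:ℂ)*(c:ℂ)) := by
      rw [hD, ht, he]; push_cast; ring
    have hzroot : (Matrix.charpoly (M.map (Int.cast : ℤ → ℂ))).IsRoot z := by
      unfold Polynomial.IsRoot
      rw [charpoly_eval]
      simp only [Matrix.map_apply, ← ha, ← hb, ← hc, ← hd]
      have hDC2 : ((D:ℤ):ℂ) = ((t:ℤ):ℂ)^2 - 4*((e:ℤ):ℂ) := by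
        rw [hD]; push_cast; ring
      have hTC : ((a:ℂ)+(d:ℂ)) = ((t:ℤ):ℂ) := by rw [ht]; push_cast; ring
      have hEC : ((a:ℂ)*(d:ℂ) - (b:ℂ)*(c:ℂ)) = ((e:ℤ):ℂ) := by rw [he]; push_cast; ring
      have hmain : z^2 - ((a:ℂ)+(d:ℂ))*z + ((a:ℂ)*(d:ℂ) - (b:ℂ)*(c:ℂ)) = 0 := by
        rw [hTC, hEC, hz]
        push_cast
        linear_combination (((s0:ℝ):ℂ)^2/4) * Complex.I_sq + (-(1:ℂ)/4) * hs2C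
          + ((1:ℂ)/4) * hDC2
      convert hmain using 2 <;> push_cast <;> ring
    have habs := hhyp z hzroot
    have hnsqz : Complex.normSq z = ((t:ℝ)/2)^2 + (s0/2)^2 := by
      rw [hz]; exact Complex.normSq_add_mul_I _ _
    have hsq : ‖z‖^2 = (e:ℝ) := by
      rw [Complex.sq_norm, hnsqz]
      have hDR : (D:ℝ) = (t:ℝ)^2 - 4*(e:ℝ) := by rw [hD]; push_cast; ring
      nlinarith [hs2]
    rcases hdet' with h1 | h1
    · rw [h1] at hsq; push_cast at hsq
      have h2 : (‖z‖ - 1)*(‖z‖ + 1) = 0 := by nlinarith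
      rcases mul_eq_zero.mp h2 with h3 | h3
      · exact habs (by linarith)
      · have := norm_nonneg z
        linarith
    · rw [h1] at hsq; push_cast at hsq
      nlinarith [sq_nonneg ‖z‖]
  -- D is not a square
  have hnsq : ¬ IsSquare D := by
    rintro ⟨r, hr⟩
    have hev : Even (t - r) := by
      have h1 : (t - r) * (t + r) = 4*e := by
        rw [hD] at hr; linear_combination hr
      have h2 : Even ((t - r) * (t + r)) := ⟨2*e, by linarith⟩
      rcases Int.even_mul.mp h2 with h | h
      · exact h
      · obtain ⟨w, hw⟩ := h
        exact ⟨w - r, by linarith⟩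
    obtain ⟨m, hm⟩ := hev
    have hr' : D = (t - 2*m)*(t - 2*m) := by
      rw [hr]; have : r = t - 2*m := by omega
      rw [this]
    have h4 : 4*e = 4*(m*(t - m)) := by
      have h5 : t^2 - 4*e = (t - 2*m)*(t-2*m) := by rw [← hD, hr']
      nlinarith [h5]
    have he4 : e = m*(t-m) := by linarith
    -- m is an integer root
    have hmroot : ((m:ℝ))^2 - (t:ℝ)*(m:ℝ) + (e:ℝ) = 0 := by
      have : (m:ℤ)^2 - t*m + e = 0 := by rw [he4]; ring
      exact_mod_cast congrArg (fun q : ℤ => (q:ℝ)) this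
    have hprod1 : m.natAbs * (t-m).natAbs = 1 := by
      have : (m*(t-m)).natAbs = 1 := by
        rw [← he4]; rcases hdet' with h | h <;> rw [h] <;> rfl
      rwa [Int.natAbs_mul] at this
    have hm1 : m.natAbs = 1 := Nat.eq_one_of_mul_eq_one_right hprod1
    have : |(m:ℝ)| = 1 := by
      rcases Int.natAbs_eq_iff.mp hm1 with h | h <;> rw [h] <;> push_cast <;> norm_num
    exact hroot (m:ℝ) hmroot this
  -- the square root
  set s := Real.sqrt (D:ℝ) with hs
  have hs2 : s^2 = (D:ℝ) := Real.sq_sqrt (by exact_mod_cast hDpos.le)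
  have hspos : 0 < s := Real.sqrt_pos.mpr (by exact_mod_cast hDpos)
  have hsirr : Irrational s := by
    rw [hs]
    exact irrational_sqrt_intCast_iff.mpr ⟨hnsq, hDpos.le⟩
  have hs2' : s^2 = (t:ℝ)^2 - 4*(e:ℝ) := by rw [hs2, hD]; push_cast; ring
  set rp := ((t:ℝ) + s)/2 with hrp
  set rm := ((t:ℝ) - s)/2 with hrm
  have hrproot : rp^2 - (t:ℝ)*rp + (e:ℝ) = 0 := by
    rw [hrp]; linear_combination (1/4 : ℝ) * hs2'
  have hrmroot : rm^2 - (t:ℝ)*rm + (e:ℝ) = 0 := by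
    rw [hrm]; linear_combination (1/4 : ℝ) * hs2'
  have hprodrm : rp * rm = (e:ℝ) := by
    rw [hrp, hrm]; linear_combination (-(1:ℝ)/4) * hs2'
  have habse : |(e:ℝ)| = 1 := by
    rcases hdet' with h | h <;> rw [h] <;> norm_num
  have hrpne : |rp| ≠ 1 := hroot rp hrproot
  have hrmne : |rm| ≠ 1 := hroot rm hrmroot
  have hrpirr : Irrational rp := by
    rw [hrp]
    have h1 : Irrational ((t:ℝ) + s) := hsirr.intCast_add t
    have h2 := h1.div_intCast (m := 2) (by norm_num)
    have h3 : ((2:ℤ):ℝ) = (2:ℝ) := by norm_num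
    rwa [h3] at h2
  have hrmirr : Irrational rm := by
    rw [hrm]
    have h1 : Irrational ((t:ℝ) - s) := by
      have h0 := (hsirr.neg).intCast_add t
      have : (t:ℝ) + -s = (t:ℝ) - s := by ring
      rwa [this] at h0
    have h2 := h1.div_intCast (m := 2) (by norm_num)
    have h3 : ((2:ℤ):ℝ) = (2:ℝ) := by norm_num
    rwa [h3] at h2
  have hrpm : rm < rp := by rw [hrp, hrm]; linarith
  -- choose labels
  obtain ⟨lam, mu, hlroot, hmroot', hmabs, hlirr, hmirr, hlm⟩ :
      ∃ lam mu : ℝ, (lam^2 - (t:ℝ)*lam + (e:ℝ) = 0) ∧ (mu^2 - (t:ℝ)*mu + (e:ℝ) = 0) ∧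
        |mu| < 1 ∧ Irrational lam ∧ Irrational mu ∧ lam ≠ mu := by
    rcases lt_or_gt_of_ne hrpne with h | h
    · exact ⟨rm, rp, hrmroot, hrproot, h, hrmirr, hrpirr, by intro hh; rw [hh] at hrpm; linarith⟩
    · have hmabs : |rm| < 1 := by
        have h0 : |rp| * |rm| = 1 := by rw [← abs_mul, hprodrm, habse]
        nlinarith [abs_nonneg rm]
      exact ⟨rp, rm, hrproot, hrmroot, hmabs, hrpirr, hrmirr, by intro hh; rw [hh] at hrpm; linarith⟩
  -- c ≠ 0
  have hc0 : c ≠ 0 := by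
    rintro hcc
    have he' : e = a*d := by rw [he, hcc]; ring
    have : (a*d).natAbs = 1 := by
      rw [← he']; rcases hdet' with h | h <;> rw [h] <;> rfl
    rw [Int.natAbs_mul] at this
    have ha1 : a.natAbs = 1 := Nat.eq_one_of_mul_eq_one_right this
    have haroot : ((a:ℝ))^2 - (t:ℝ)*(a:ℝ) + (e:ℝ) = 0 := by
      have : (a:ℤ)^2 - t*a + e = 0 := by rw [ht, he']; ring
      exact_mod_cast congrArg (fun q : ℤ => (q:ℝ)) this
    have : |(a:ℝ)| = 1 := by
      rcases Int.natAbs_eq_iff.mp ha1 with h | h <;> rw [h] <;> push_cast <;> norm_num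
    exact hroot (a:ℝ) haroot this
  have hcR : (c:ℝ) ≠ 0 := by exact_mod_cast hc0
  have htR : ((t:ℤ):ℝ) = (a:ℝ) + (d:ℝ) := by rw [ht]; push_cast; ring
  have heR : ((e:ℤ):ℝ) = (a:ℝ)*(d:ℝ) - (b:ℝ)*(c:ℝ) := by rw [he]; push_cast; ring
  refine ⟨(lam - (d:ℝ))/(c:ℝ), (mu - (d:ℝ))/(c:ℝ), ?_, ?_, ?_, ?_, ?_, ?_⟩
  · unfold IsFix
    field_simp
    linear_combination (-1 : ℝ)*hlroot + (-lam)*htR + heR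
  · unfold IsFix
    field_simp
    linear_combination (-1 : ℝ)*hmroot' + (-mu)*htR + heR
  · have hev : (c:ℝ)*((mu - (d:ℝ))/(c:ℝ)) + (d:ℝ) = mu := by field_simp; ring
    rw [hev]; exact hmabs
  · exact (hlirr.sub_intCast d).div_intCast hc0
  · exact (hmirr.sub_intCast d).div_intCast hc0
  · intro hh
    apply hlm
    have h2 := congrArg (fun z : ℝ => z * (c:ℝ)) hh
    field_simp at h2
    linarith

theorem pair_neg {a b c d : ℤ} {x y : ℝ} (h : Pair a b c d x y) :
    Pair (-a) (-b) (-c) (-d) x y := by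
  obtain ⟨hfx, hfy, hev, hix, hiy, hxy⟩ := h
  unfold IsFix at hfx hfy
  refine ⟨?_, ?_, ?_, hix, hiy, hxy⟩
  · unfold IsFix; push_cast; linear_combination -hfx
  · unfold IsFix; push_cast; linear_combination -hfy
  · have : ((-c : ℤ):ℝ)*y + ((-d : ℤ):ℝ) = -((c:ℝ)*y + (d:ℝ)) := by push_cast; ring
    rw [this, abs_neg]; exact hev

theorem neg_one_smul_mat (a b c d : ℤ) :
    (-1 : ℤ) • !![a,b;c,d] = !![-a,-b;-c,-d] := by
  ext i j
  fin_cases i <;> fin_cases j <;> simp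

end Stmt8

/-- every hyperbolic matrix in `GL₂(ℤ)` is conjugate in `GL₂(ℤ)` to
`± ∏ᵢ [[kᵢ,1],[1,0]]` with `n ≥ 1` and positive integers `kᵢ`. -/
theorem stmt8 (M : Matrix (Fin 2) (Fin 2) ℤ) (hdet : M.det = 1 ∨ M.det = -1)
    (hhyp : ∀ z : ℂ, (Matrix.charpoly (M.map (Int.cast : ℤ → ℂ))).IsRoot z →
      ‖z‖ ≠ 1) :
    ∃ n : ℕ, 1 ≤ n ∧ ∃ k : Fin n → ℤ, (∀ i, 1 ≤ k i) ∧ ∃ ε : ℤ, (ε = 1 ∨ ε = -1) ∧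
      ∃ Q : Matrix (Fin 2) (Fin 2) ℤ, (Q.det = 1 ∨ Q.det = -1) ∧
        Q * M = (ε • (List.ofFn (fun i : Fin n => !![k i, 1; 1, 0])).prod) * Q := by
  classical
  obtain ⟨x, y, hpair⟩ := Stmt8.initial M hdet hhyp
  have hdet' : M 0 0 * M 1 1 - M 0 1 * M 1 0 = 1 ∨
      M 0 0 * M 1 1 - M 0 1 * M 1 0 = -1 := by
    rwa [Matrix.det_fin_two] at hdet
  obtain ⟨a2, b2, c2, d2, x2, y2, hp2, hd2, hrel, hx2, hy21, hy22⟩ :=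
    Stmt8.reduce ((M 1 0).natAbs) (M 0 0) (M 0 1) (M 1 0) (M 1 1) x y hpair hdet' le_rfl
  have h0 : Stmt8.Rel M !![M 0 0, M 0 1; M 1 0, M 1 1] :=
    ⟨1, Or.inl (Matrix.det_one), by rw [Matrix.one_mul, ← Matrix.eta_fin_two, Matrix.mul_one]⟩
  obtain ⟨Q, hQdet, hQeq⟩ := h0.trans hrel
  have hc2 : c2 ≠ 0 := Stmt8.c_ne_zero hp2 hd2
  rcases lt_or_gt_of_ne hc2 with hneg | hpos
  · -- c2 < 0 : use ε = -1
    have hpn := Stmt8.pair_neg hp2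
    have hdn : (-a2)*(-d2) - (-b2)*(-c2) = 1 ∨ (-a2)*(-d2) - (-b2)*(-c2) = -1 := by
      rcases hd2 with h | h
      · left; linear_combination h
      · right; linear_combination h
    obtain ⟨hb, hd0, hba, hca, hdb, hdc⟩ :=
      Stmt8.to_S' hpn hx2 hy21 hy22 (by omega : 1 ≤ -c2)
    obtain ⟨n, hn, ks, hks, heq⟩ := Stmt8.factor ((-a2).natAbs) (-a2) (-b2) (-c2) (-d2)
      le_rfl hdn hb (by omega) hd0 hba hca hdb hdc
    refine ⟨n, hn, ks, hks, -1, Or.inr rfl, Q, hQdet, ?_⟩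
    rw [← heq, Stmt8.neg_one_smul_mat]
    simp only [neg_neg]
    exact hQeq
  · -- c2 > 0 : ε = 1
    obtain ⟨hb, hd0, hba, hca, hdb, hdc⟩ :=
      Stmt8.to_S' hp2 hx2 hy21 hy22 (by omega : 1 ≤ c2)
    obtain ⟨n, hn, ks, hks, heq⟩ := Stmt8.factor (a2.natAbs) a2 b2 c2 d2
      le_rfl hd2 hb (by omega) hd0 hba hca hdb hdc
    refine ⟨n, hn, ks, hks, 1, Or.inl rfl, Q, hQdet, ?_⟩
    rw [← heq, one_smul]
    exact hQeq
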